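/- arXiv:1710.02354 — 4 statements merged into one kernel-verified Lean document; each statement's English description precedes it below -/
import Mathlib

section
/- Let M be a prime and χ a nontrivial Dirichlet character modulo M with complex values (so χ(u) = 0 for u = 0 in ℤ/Mℤ). Let a, r1, r2 ∈ ℤ/Mℤ with a ≠ 0 and a·r2 ≠ r1. Then ∑_{x ∈ ℤ/Mℤ} χ(a·x + r1) · conj(χ(x + r2)) = −χ(a), where conj denotes complex conjugation. -/
open Complex

/-- For `M` prime, `χ` a nontrivial Dirichlet character mod `M`, `a ≠ 0` and
`a·r2 ≠ r1` in `ℤ/Mℤ`, one has `∑_x χ(a x + r1) conj(χ(x + r2)) = -χ(a)`. -/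
theorem char_sum_mobius_generic
    (M : ℕ) (hM : M.Prime) (χ : DirichletCharacter ℂ M) (hχ : χ ≠ 1)
    (a r1 r2 : ZMod M) (ha : a ≠ 0) (h : a * r2 ≠ r1) :
    haveI : NeZero M := ⟨hM.ne_zero⟩
    ∑ x : ZMod M, χ (a * x + r1) * (starRingEnd ℂ) (χ (x + r2)) = -χ a := by
  haveI : NeZero M := ⟨hM.ne_zero⟩
  haveI : Fact M.Prime := ⟨hM⟩
  set c : ZMod M := r1 - a * r2 with hc
  have hc0 : c ≠ 0 := sub_ne_zero.mpr h.symm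
  have e1 : ∑ x : ZMod M, χ (a * x + r1) * (starRingEnd ℂ) (χ (x + r2))
      = ∑ y : ZMod M, χ (a * y + c) * (starRingEnd ℂ) (χ y) := by
    refine Fintype.sum_equiv (Equiv.addRight r2) _ _ fun x => ?_
    simp only [Equiv.coe_addRight]
    congr 2
    rw [hc]; ring
  rw [e1]
  have e2 : ∑ y : ZMod M, χ (a * y + c) * (starRingEnd ℂ) (χ y)
      = ∑ y ∈ Finset.univ.erase (0 : ZMod M), χ (a + c * y⁻¹) := by
    have h0 : χ (a * (0 : ZMod M) + c) * (starRingEnd ℂ) (χ (0 : ZMod M)) = 0 := by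
      rw [MulChar.map_zero]; simp
    rw [← Finset.sum_erase (f := fun y : ZMod M => χ (a * y + c) * (starRingEnd ℂ) (χ y))
      Finset.univ h0]
    refine Finset.sum_congr rfl fun y hy => ?_
    have hy0 : y ≠ 0 := Finset.ne_of_mem_erase hy
    have : (starRingEnd ℂ) (χ y) = χ y⁻¹ := by
      rw [show (starRingEnd ℂ) (χ y) = star (χ y) from rfl, MulChar.star_apply',
        MulChar.inv_apply']
    rw [this, ← map_mul]
    congr 1
    field_simp
  rw [e2]
  have e3 : ∑ y ∈ Finset.univ.erase (0 : ZMod M), χ (a + c * y⁻¹)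
      = ∑ z ∈ Finset.univ.erase a, χ z := by
    refine Finset.sum_nbij' (fun y => a + c * y⁻¹) (fun z => c / (z - a)) ?_ ?_ ?_ ?_ ?_
    · intro y hy
      have hy0 : y ≠ 0 := Finset.ne_of_mem_erase hy
      simp only [Finset.mem_erase, Finset.mem_univ, and_true]
      intro hz
      rw [add_eq_left, mul_eq_zero] at hz
      rcases hz with h1 | h1
      · exact hc0 h1
      · exact hy0 (inv_eq_zero.mp h1)
    · intro z hz
      have hz0 : z ≠ a := Finset.ne_of_mem_erase hz
      simp only [Finset.mem_erase, Finset.mem_univ, and_true]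
      exact div_ne_zero hc0 (sub_ne_zero.mpr hz0)
    · intro y hy
      have hy0 : y ≠ 0 := Finset.ne_of_mem_erase hy
      field_simp
      rw [show a * y + c - a * y = c by ring]
      exact div_self hc0
    · intro z hz
      have hz0 : z ≠ a := Finset.ne_of_mem_erase hz
      have hza : z - a ≠ 0 := sub_ne_zero.mpr hz0
      field_simp
      ring
    · intro y hy
      rfl
  rw [e3]
  have hsum : ∑ z : ZMod M, χ z = 0 := MulChar.sum_eq_zero_of_ne_one hχ
  have h2 : χ a + ∑ z ∈ Finset.univ.erase a, χ z = ∑ z : ZMod M, χ z :=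
    Finset.add_sum_erase _ _ (Finset.mem_univ a)
  linear_combination h2 + hsum
end

section
/- Let M be a prime, let χ be a nontrivial Dirichlet character modulo M, and write χ̄ for the complex-conjugate character. For x ∈ ℤ/Mℤ write e_M(x) = exp(2πi·x̃/M), where x̃ ∈ ℤ is any lift of x. Define the Kloosterman sum S(u, a; M) = ∑_{β ∈ (ℤ/Mℤ)ˣ} e_M(β·u + β^{-1}·a) and the Gauss sum g(χ̄) = ∑_{a ∈ ℤ/Mℤ} χ̄(a) e_M(a). Then for all u, v ∈ ℤ/Mℤ: ∑_{a ∈ ℤ/Mℤ} χ̄(a) · S(u, a; M) · e_M(a·v) = g(χ̄) · ∑_{β ∈ (ℤ/Mℤ)ˣ} χ(β^{-1} + v) · e_M(β·u). -/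
open Complex

/-- The standard additive character `e_q(x) = exp(2πi·x̃/q)` on `ℤ/qℤ`,
evaluated at the canonical lift `x̃ = x.val`. -/
noncomputable def eZMod (q : ℕ) (x : ZMod q) : ℂ :=
  Complex.exp (2 * Real.pi * Complex.I * (x.val : ℂ) / q)

lemma eZMod_eq_stdAddChar {M : ℕ} [NeZero M] (x : ZMod M) :
    eZMod M x = ZMod.stdAddChar x := by
  have h : ((x.val : ℤ) : ZMod M) = x := by simp
  have := ZMod.stdAddChar_coe (N := M) (x.val : ℤ)
  rw [h] at this
  rw [this, eZMod]
  push_cast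
  ring_nf

lemma twist_sum {M : ℕ} (hM : M.Prime) (χ : DirichletCharacter ℂ M) (hχ : χ ≠ 1)
    (b : ZMod M) :
    haveI : NeZero M := ⟨hM.ne_zero⟩
    ∑ a : ZMod M, (starRingEnd ℂ) (χ a) * ZMod.stdAddChar (a * b)
      = χ b * ∑ a : ZMod M, (starRingEnd ℂ) (χ a) * ZMod.stdAddChar a := by
  haveI : NeZero M := ⟨hM.ne_zero⟩
  haveI : Fact M.Prime := ⟨hM⟩
  set ψ : AddChar (ZMod M) ℂ := ZMod.stdAddChar with hψ
  set χs : MulChar (ZMod M) ℂ := χ.ringHomComp (starRingEnd ℂ) with hχs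
  have hχsa : ∀ a : ZMod M, χs a = (starRingEnd ℂ) (χ a) := fun a => rfl
  rcases eq_or_ne b 0 with rfl | hb
  · simp only [mul_zero, AddChar.map_zero_eq_one, mul_one]
    rw [← map_sum, MulChar.sum_eq_zero_of_ne_one hχ, map_zero,
      MulChar.map_zero, zero_mul]
  · set bu : (ZMod M)ˣ := Units.mk0 b hb with hbu
    have hshift := gaussSum_mulShift χs ψ bu
    have hS : gaussSum χs (AddChar.mulShift ψ bu)
        = ∑ a : ZMod M, (starRingEnd ℂ) (χ a) * ψ (a * b) := by
      simp only [gaussSum, AddChar.mulShift_apply, hχsa]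
      refine Finset.sum_congr rfl fun a _ => by rw [mul_comm (bu : ZMod M) a]; rfl
    have hnorm : ‖χ b‖ = 1 := χ.unit_norm_eq_one bu
    have hone : χ b * χs b = 1 := by
      rw [hχsa, Complex.mul_conj']
      rw [hnorm]
      norm_num
    calc ∑ a : ZMod M, (starRingEnd ℂ) (χ a) * ψ (a * b)
        = (χ b * χs b) * ∑ a : ZMod M, (starRingEnd ℂ) (χ a) * ψ (a * b) := by
          rw [hone, one_mul]
      _ = χ b * (χs b * gaussSum χs (AddChar.mulShift ψ bu)) := by rw [hS]; ring
      _ = χ b * gaussSum χs ψ := by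
          rw [show χs b = χs bu from rfl, hshift]
      _ = χ b * ∑ a : ZMod M, (starRingEnd ℂ) (χ a) * ψ a := by
          simp only [gaussSum, hχsa]

/-- Unfolding a sum of Kloosterman sums twisted by `χ̄` against an additive character:
`∑_a χ̄(a) S(u, a; M) e_M(a v) = g(χ̄) ∑_{β ∈ (ℤ/Mℤ)ˣ} χ(β⁻¹ + v) e_M(β u)`,
where `g(χ̄)` is the Gauss sum of the conjugate character. -/
theorem kloosterman_twist_unfold
    (M : ℕ) (hM : M.Prime) (χ : DirichletCharacter ℂ M) (hχ : χ ≠ 1) (u v : ZMod M) :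
    haveI : NeZero M := ⟨hM.ne_zero⟩
    ∑ a : ZMod M, (starRingEnd ℂ) (χ a) *
        (∑ β : (ZMod M)ˣ, eZMod M ((β : ZMod M) * u + ((β⁻¹ : (ZMod M)ˣ) : ZMod M) * a)) *
        eZMod M (a * v)
      = (∑ b : ZMod M, (starRingEnd ℂ) (χ b) * eZMod M b) *
        ∑ β : (ZMod M)ˣ, χ (((β⁻¹ : (ZMod M)ˣ) : ZMod M) + v) * eZMod M ((β : ZMod M) * u) := by
  haveI : NeZero M := ⟨hM.ne_zero⟩
  simp only [eZMod_eq_stdAddChar]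
  set ψ : AddChar (ZMod M) ℂ := ZMod.stdAddChar with hψ
  calc ∑ a : ZMod M, (starRingEnd ℂ) (χ a) *
        (∑ β : (ZMod M)ˣ, ψ ((β : ZMod M) * u + ((β⁻¹ : (ZMod M)ˣ) : ZMod M) * a)) *
        ψ (a * v)
      = ∑ β : (ZMod M)ˣ, ∑ a : ZMod M, (starRingEnd ℂ) (χ a) *
          ψ ((β : ZMod M) * u + ((β⁻¹ : (ZMod M)ˣ) : ZMod M) * a) * ψ (a * v) := by
        rw [Finset.sum_comm]
        exact Finset.sum_congr rfl fun a _ => by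
          rw [Finset.mul_sum, Finset.sum_mul]
    _ = ∑ β : (ZMod M)ˣ, ψ ((β : ZMod M) * u) *
          ∑ a : ZMod M, (starRingEnd ℂ) (χ a) *
            ψ (a * (((β⁻¹ : (ZMod M)ˣ) : ZMod M) + v)) := by
        refine Finset.sum_congr rfl fun β _ => ?_
        rw [Finset.mul_sum]
        refine Finset.sum_congr rfl fun a _ => ?_
        rw [AddChar.map_add_eq_mul, mul_add, AddChar.map_add_eq_mul,
          mul_comm a (((β⁻¹ : (ZMod M)ˣ) : ZMod M)), mul_comm a v]
        ring
    _ = ∑ β : (ZMod M)ˣ, ψ ((β : ZMod M) * u) *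
          (χ (((β⁻¹ : (ZMod M)ˣ) : ZMod M) + v) *
            ∑ a : ZMod M, (starRingEnd ℂ) (χ a) * ψ a) := by
        refine Finset.sum_congr rfl fun β _ => ?_
        rw [twist_sum hM χ hχ]
    _ = (∑ b : ZMod M, (starRingEnd ℂ) (χ b) * ψ b) *
          ∑ β : (ZMod M)ˣ, χ (((β⁻¹ : (ZMod M)ˣ) : ZMod M) + v) * ψ ((β : ZMod M) * u) := by
        rw [Finset.mul_sum]
        exact Finset.sum_congr rfl fun β _ => by ring
end

section
/- Let c1, c2, n be integers and r1, r2 positive integers with gcd(r1, c1) = 1 and gcd(r2, c2) = 1. Then the number of pairs (y, x) ∈ (ℤ/r1ℤ) × (ℤ/r2ℤ) satisfying the two congruences c1·r1·x ≡ c1·c2·n (mod r2) and c2·r2·y ≡ −c1·c2·n (mod r1) is at most gcd(r1, r2) · gcd(c1, r2) · gcd(c2, r1) · gcd(n, r1·r2). -/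
private lemma dvd_of_solvable {m : ℕ} [NeZero m] {a b : ℤ}
    (h : ∃ x : ZMod m, (a : ZMod m) * x = (b : ZMod m))
    {d : ℤ} (hda : d ∣ a) (hdm : d ∣ (m : ℤ)) : d ∣ b := by
  obtain ⟨x, hx⟩ := h
  have hx' : ((b - a * (x.val : ℤ) : ℤ) : ZMod m) = 0 := by
    push_cast
    rw [ZMod.natCast_zmod_val, hx]; ring
  have hmd : (m : ℤ) ∣ b - a * (x.val : ℤ) :=
    (ZMod.intCast_zmod_eq_zero_iff_dvd _ _).mp hx'
  have h1 : d ∣ b - a * (x.val : ℤ) := hdm.trans hmd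
  have := dvd_add h1 (hda.mul_right (x.val : ℤ))
  simpa using this

private lemma card_lin_le (m : ℕ) (hm : 0 < m) (a b : ℤ) :
    haveI : NeZero m := ⟨hm.ne'⟩
    (Finset.univ.filter fun x : ZMod m => (a : ZMod m) * x = (b : ZMod m)).card
      ≤ Int.gcd a (m : ℤ) := by
  haveI : NeZero m := ⟨hm.ne'⟩
  set g := Int.gcd a (m : ℤ) with hgdef
  set S := (Finset.univ.filter fun x : ZMod m => (a : ZMod m) * x = (b : ZMod m)) with hS
  rcases S.eq_empty_or_nonempty with h | ⟨x0, hx0⟩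
  · simp [h]
  have hgm : g ∣ m := Int.natCast_dvd_natCast.mp
    (by simpa using Int.gcd_dvd_right (a := a) (b := (m : ℤ)))
  obtain ⟨k, hk⟩ := hgm
  have hg : 0 < g := Int.gcd_pos_of_ne_zero_right _ (by exact_mod_cast hm.ne')
  have hk0 : 0 < k := by
    rcases Nat.eq_zero_or_pos k with rfl | h
    · rw [Nat.mul_zero] at hk; omega
    · exact h
  have hx0' : (a : ZMod m) * x0 = (b : ZMod m) := by
    simpa [hS] using hx0
  -- key: for any solution x, k ∣ (x - x0).val
  have key : ∀ x ∈ S, k ∣ (x - x0).val := by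
    intro x hx
    have hx' : (a : ZMod m) * x = (b : ZMod m) := by simpa [hS] using hx
    have hgz : (g : ZMod m) * (x - x0) = 0 := by
      have hbez : (g : ℤ) = a * Int.gcdA a (m : ℤ) + (m : ℤ) * Int.gcdB a (m : ℤ) :=
        Int.gcd_eq_gcd_ab a (m : ℤ)
      have : ((g : ℤ) : ZMod m) = (a : ZMod m) * ((Int.gcdA a (m : ℤ) : ℤ) : ZMod m) := by
        rw [hbez]; push_cast; simp
      calc (g : ZMod m) * (x - x0)
          = ((Int.gcdA a (m : ℤ) : ℤ) : ZMod m) * ((a : ZMod m) * x - (a : ZMod m) * x0) := by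
            push_cast at this ⊢; rw [this]; ring
        _ = 0 := by rw [hx', hx0']; ring
    have hdvd : m ∣ g * (x - x0).val := by
      rw [← ZMod.natCast_eq_zero_iff]
      push_cast
      rw [ZMod.natCast_zmod_val]
      exact hgz
    have hdvd' : g * k ∣ g * (x - x0).val := by rw [← hk]; exact hdvd
    exact (mul_dvd_mul_iff_left hg.ne').mp hdvd'
  -- inject into range g
  have hinj : Set.InjOn (fun x : ZMod m => (x - x0).val / k) S := by
    intro x hx y hy hxy
    have hvx : (x - x0).val = k * ((x - x0).val / k) := (Nat.mul_div_cancel' (key x hx)).symm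
    have hvy : (y - x0).val = k * ((y - x0).val / k) := (Nat.mul_div_cancel' (key y hy)).symm
    have hv : (x - x0).val = (y - x0).val := by
      rw [hvx, hvy]; simp only at hxy; rw [hxy]
    have : x - x0 = y - x0 := by
      rw [← ZMod.natCast_zmod_val (x - x0), ← ZMod.natCast_zmod_val (y - x0), hv]
    exact sub_left_injective this
  have hmaps : ∀ x ∈ S, (x - x0).val / k ∈ Finset.range g := by
    intro x hx
    rw [Finset.mem_range, Nat.div_lt_iff_lt_mul hk0]
    calc (x - x0).val < m := ZMod.val_lt _
      _ = g * k := hk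
  calc S.card ≤ (Finset.range g).card := Finset.card_le_card_of_injOn _ hmaps hinj
    _ = g := Finset.card_range g

/-- Counting solutions of the pair of linear congruences
`c1·r1·x ≡ c1·c2·n (mod r2)` and `c2·r2·y ≡ -c1·c2·n (mod r1)`:
assuming `gcd(r1, c1) = gcd(r2, c2) = 1`, the number of pairs
`(y, x) ∈ ℤ/r1ℤ × ℤ/r2ℤ` is at most
`gcd(r1,r2) · gcd(c1,r2) · gcd(c2,r1) · gcd(n, r1·r2)`. -/
theorem congruence_pair_count
    (c1 c2 n : ℤ) (r1 r2 : ℕ) (hr1 : 0 < r1) (hr2 : 0 < r2)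
    (hco1 : Int.gcd (r1 : ℤ) c1 = 1) (hco2 : Int.gcd (r2 : ℤ) c2 = 1) :
    haveI : NeZero r1 := ⟨hr1.ne'⟩
    haveI : NeZero r2 := ⟨hr2.ne'⟩
    (Finset.univ.filter (fun p : ZMod r1 × ZMod r2 =>
        (c1 : ZMod r2) * (r1 : ZMod r2) * p.2 = ((c1 * c2 * n : ℤ) : ZMod r2) ∧
        (c2 : ZMod r1) * (r2 : ZMod r1) * p.1 = ((-(c1 * c2 * n) : ℤ) : ZMod r1))).card
      ≤ Nat.gcd r1 r2 * Int.gcd c1 (r2 : ℤ) * Int.gcd c2 (r1 : ℤ) *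
          Int.gcd n ((r1 : ℤ) * (r2 : ℤ)) := by
  haveI : NeZero r1 := ⟨hr1.ne'⟩
  haveI : NeZero r2 := ⟨hr2.ne'⟩
  -- rewrite the filter predicates in the `card_lin_le` shape
  have hcast1 : ∀ x : ZMod r2, ((c1 * (r1 : ℤ) : ℤ) : ZMod r2) * x
      = (c1 : ZMod r2) * (r1 : ZMod r2) * x := by intro x; push_cast; ring
  have hcast2 : ∀ y : ZMod r1, ((c2 * (r2 : ℤ) : ℤ) : ZMod r1) * y
      = (c2 : ZMod r1) * (r2 : ZMod r1) * y := by intro y; push_cast; ring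
  set Sy := Finset.univ.filter
      (fun y : ZMod r1 => ((c2 * (r2 : ℤ) : ℤ) : ZMod r1) * y
        = ((-(c1 * c2 * n) : ℤ) : ZMod r1)) with hSy
  set Sx := Finset.univ.filter
      (fun x : ZMod r2 => ((c1 * (r1 : ℤ) : ℤ) : ZMod r2) * x
        = ((c1 * c2 * n : ℤ) : ZMod r2)) with hSx
  have hprod : (Finset.univ.filter (fun p : ZMod r1 × ZMod r2 =>
        (c1 : ZMod r2) * (r1 : ZMod r2) * p.2 = ((c1 * c2 * n : ℤ) : ZMod r2) ∧
        (c2 : ZMod r1) * (r2 : ZMod r1) * p.1 = ((-(c1 * c2 * n) : ℤ) : ZMod r1)))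
      = Sy ×ˢ Sx := by
    ext ⟨y, x⟩
    simp only [Finset.mem_filter, Finset.mem_univ, true_and, Finset.mem_product,
      hSy, hSx, hcast1, hcast2]
    tauto
  rw [hprod, Finset.card_product]
  -- trivial case : empty
  rcases Nat.eq_zero_or_pos (Sy.card * Sx.card) with h0 | hpos
  · omega
  have hy0 : 0 < Sy.card := Nat.pos_of_ne_zero (fun h => by simp [h] at hpos)
  have hx0 : 0 < Sx.card := Nat.pos_of_ne_zero (fun h => by simp [h] at hpos)
  have hSyne : ∃ y : ZMod r1, ((c2 * (r2 : ℤ) : ℤ) : ZMod r1) * y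
      = ((-(c1 * c2 * n) : ℤ) : ZMod r1) := by
    obtain ⟨y, hy⟩ := Finset.card_pos.mp hy0
    exact ⟨y, by simpa [hSy] using hy⟩
  -- let d = gcd r1 r2 ; show d ∣ n
  set d := Nat.gcd r1 r2 with hd
  have hdr1 : (d : ℤ) ∣ (r1 : ℤ) := Int.natCast_dvd_natCast.mpr (Nat.gcd_dvd_left _ _)
  have hdr2 : (d : ℤ) ∣ (r2 : ℤ) := Int.natCast_dvd_natCast.mpr (Nat.gcd_dvd_right _ _)
  have hdvd : (d : ℤ) ∣ -(c1 * c2 * n) :=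
    dvd_of_solvable hSyne (hdr2.mul_left c2) hdr1
  have hdvd' : (d : ℤ) ∣ c1 * (c2 * n) := by
    have := hdvd.neg_right; simpa [mul_assoc] using this
  have hcop1 : IsCoprime ((d : ℤ)) c1 :=
    IsCoprime.of_isCoprime_of_dvd_left (Int.isCoprime_iff_gcd_eq_one.mpr hco1) hdr1
  have hcop2 : IsCoprime ((d : ℤ)) c2 :=
    IsCoprime.of_isCoprime_of_dvd_left (Int.isCoprime_iff_gcd_eq_one.mpr hco2) hdr2
  have hdn : (d : ℤ) ∣ n := hcop2.dvd_of_dvd_mul_left (hcop1.dvd_of_dvd_mul_left hdvd')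
  have hdG : d ∣ Int.gcd n ((r1 : ℤ) * (r2 : ℤ)) := by
    have : (d : ℤ) ∣ (Int.gcd n ((r1 : ℤ) * (r2 : ℤ)) : ℤ) :=
      Int.dvd_coe_gcd hdn (hdr1.mul_right _)
    exact_mod_cast this
  have hGpos : 0 < Int.gcd n ((r1 : ℤ) * (r2 : ℤ)) := by
    apply Int.gcd_pos_of_ne_zero_right
    positivity
  have hdle : d ≤ Int.gcd n ((r1 : ℤ) * (r2 : ℤ)) := Nat.le_of_dvd hGpos hdG
  -- bound the two cardinalities
  have hBx : Sx.card ≤ Int.gcd (c1 * (r1 : ℤ)) (r2 : ℤ) :=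
    card_lin_le r2 hr2 (c1 * (r1 : ℤ)) (c1 * c2 * n)
  have hBy : Sy.card ≤ Int.gcd (c2 * (r2 : ℤ)) (r1 : ℤ) :=
    card_lin_le r1 hr1 (c2 * (r2 : ℤ)) (-(c1 * c2 * n))
  -- gcd(c1*r1, r2) ≤ gcd(c1, r2) * d
  have hgx : Int.gcd (c1 * (r1 : ℤ)) (r2 : ℤ) ≤ Int.gcd c1 (r2 : ℤ) * d := by
    have h1 : Int.gcd (c1 * (r1 : ℤ)) (r2 : ℤ) = Nat.gcd r2 (c1.natAbs * r1) := by
      rw [Int.gcd, Nat.gcd_comm]; simp [Int.natAbs_mul]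
    have h2 : Nat.gcd r2 (c1.natAbs * r1) ∣ Nat.gcd r2 c1.natAbs * Nat.gcd r2 r1 :=
      gcd_mul_dvd_mul_gcd r2 c1.natAbs r1
    have h3 : 0 < Nat.gcd r2 c1.natAbs * Nat.gcd r2 r1 :=
      Nat.mul_pos (Nat.gcd_pos_of_pos_left _ hr2) (Nat.gcd_pos_of_pos_left _ hr2)
    have := Nat.le_of_dvd h3 h2
    rw [h1]
    calc Nat.gcd r2 (c1.natAbs * r1) ≤ Nat.gcd r2 c1.natAbs * Nat.gcd r2 r1 := this
      _ = Int.gcd c1 (r2 : ℤ) * d := by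
          rw [Nat.gcd_comm r2 c1.natAbs, Nat.gcd_comm r2 r1]
          simp [Int.gcd, hd]
  have hgy : Int.gcd (c2 * (r2 : ℤ)) (r1 : ℤ) ≤ Int.gcd c2 (r1 : ℤ) * d := by
    have h1 : Int.gcd (c2 * (r2 : ℤ)) (r1 : ℤ) = Nat.gcd r1 (c2.natAbs * r2) := by
      rw [Int.gcd, Nat.gcd_comm]; simp [Int.natAbs_mul]
    have h2 : Nat.gcd r1 (c2.natAbs * r2) ∣ Nat.gcd r1 c2.natAbs * Nat.gcd r1 r2 :=
      gcd_mul_dvd_mul_gcd r1 c2.natAbs r2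
    have h3 : 0 < Nat.gcd r1 c2.natAbs * Nat.gcd r1 r2 :=
      Nat.mul_pos (Nat.gcd_pos_of_pos_left _ hr1) (Nat.gcd_pos_of_pos_left _ hr1)
    have := Nat.le_of_dvd h3 h2
    rw [h1]
    calc Nat.gcd r1 (c2.natAbs * r2) ≤ Nat.gcd r1 c2.natAbs * Nat.gcd r1 r2 := this
      _ = Int.gcd c2 (r1 : ℤ) * d := by
          rw [Nat.gcd_comm r1 c2.natAbs]
          simp [Int.gcd, hd]
  calc Sy.card * Sx.card
      ≤ (Int.gcd c2 (r1 : ℤ) * d) * (Int.gcd c1 (r2 : ℤ) * Int.gcd n ((r1 : ℤ) * (r2 : ℤ))) := by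
        refine Nat.mul_le_mul (hBy.trans hgy) (hBx.trans ?_)
        exact hgx.trans (Nat.mul_le_mul_left _ hdle)
    _ = d * Int.gcd c1 (r2 : ℤ) * Int.gcd c2 (r1 : ℤ) * Int.gcd n ((r1 : ℤ) * (r2 : ℤ)) := by
        ring
end

section
/- Let M be a prime and χ a nontrivial Dirichlet character modulo M with complex values (χ(0) = 0), and write χ̄ for the complex-conjugate character. For x ∈ ℤ/Mℤ write e_M(x) = exp(2πi·x̃/M) for any lift x̃ of x. Let ℓ1, ℓ2, c1, c2, r1, r2 ∈ (ℤ/Mℤ)ˣ and n ∈ ℤ/Mℤ, and set F = ℓ1·c2·r2 − ℓ2·c1·r1 + c1·c2·n and K = (r1·r2·c1·c2)^{-1}·F in ℤ/Mℤ. Then ∑_{b ∈ ℤ/Mℤ} ∑_{a1 ∈ (ℤ/Mℤ)ˣ} ∑_{a2 ∈ (ℤ/Mℤ)ˣ} χ(a1^{-1} + r1) · χ̄(a2^{-1} + r2) · e_M( b·( c1^{-1}·ℓ1·a1 − c2^{-1}·ℓ2·a2 + c1^{-1}·ℓ1·r1^{-1} − c2^{-1}·ℓ2·r2^{-1} + r1^{-1}·r2^{-1}·n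 ) ) = M · ∑_{x ∈ (ℤ/Mℤ)ˣ, c2^{-1}·ℓ2·x ≠ K} χ( c1^{-1}·ℓ1·( c2^{-1}·ℓ2·x − K )^{-1} + r1 ) · χ̄( x^{-1} + r2 ). -/
open Complex

lemma sum_eZMod_eq_zero (M : ℕ) [NeZero M] (hM : 1 < M) : ∑ c : ZMod M, eZMod M c = 0 := by
  have hζ : IsPrimitiveRoot (exp (2 * Real.pi * Complex.I / M)) M :=
    Complex.isPrimitiveRoot_exp M (NeZero.ne M)
  have h1 : ∀ c : ZMod M, eZMod M c = exp (2 * Real.pi * Complex.I / M) ^ c.val := by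
    intro c
    rw [eZMod, ← Complex.exp_nat_mul]
    congr 1
    ring
  calc ∑ c : ZMod M, eZMod M c
      = ∑ i ∈ Finset.range M, exp (2 * Real.pi * Complex.I / M) ^ i := by
        refine Finset.sum_nbij' (i := fun c : ZMod M => c.val)
          (j := fun i : ℕ => (i : ZMod M)) ?_ ?_ ?_ ?_ ?_
        · intro c _; exact Finset.mem_range.mpr (ZMod.val_lt c)
        · intro i _; exact Finset.mem_univ _
        · intro c _; exact ZMod.natCast_rightInverse c
        · intro i hi; exact ZMod.val_cast_of_lt (Finset.mem_range.mp hi)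
        · intro c _; exact h1 c
    _ = 0 := hζ.geom_sum_eq_zero hM

lemma sum_eZMod_mul_eq_ite (M : ℕ) [NeZero M] (hM : M.Prime) (t : ZMod M) :
    ∑ b : ZMod M, eZMod M (b * t) = if t = 0 then (M : ℂ) else 0 := by
  haveI : Fact M.Prime := ⟨hM⟩
  rcases eq_or_ne t 0 with ht | ht
  · simp [ht, eZMod, Finset.card_univ]
  · rw [if_neg ht]
    exact (Fintype.sum_equiv (Equiv.mulRight₀ t ht) (fun b => eZMod M (b * t))
      (fun c => eZMod M c) (fun b => rfl)).trans (sum_eZMod_eq_zero M hM.one_lt)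

lemma key_reduction (M : ℕ) [NeZero M] (hM : M.Prime) (f g : ZMod M → ℂ) (u v K : ZMod M)
    (hu : u ≠ 0) (hv : v ≠ 0) :
    ∑ b : ZMod M, ∑ a1 : (ZMod M)ˣ, ∑ a2 : (ZMod M)ˣ,
      f a1 * g a2 * eZMod M (b * (u * a1 - v * a2 + K))
    = (M : ℂ) * ∑ x ∈ Finset.univ.filter (fun x : (ZMod M)ˣ => v * x ≠ K),
        f (u⁻¹ * (v * x - K)) * g x := by
  haveI : Fact M.Prime := ⟨hM⟩
  have step1 : ∑ b : ZMod M, ∑ a1 : (ZMod M)ˣ, ∑ a2 : (ZMod M)ˣ,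
      f a1 * g a2 * eZMod M (b * (u * a1 - v * a2 + K))
      = ∑ a2 : (ZMod M)ˣ, ∑ a1 : (ZMod M)ˣ,
        f a1 * g a2 * (if u * a1 - v * a2 + K = 0 then (M : ℂ) else 0) := by
    rw [Finset.sum_comm]
    refine (Finset.sum_congr rfl fun a1 _ => ?_).trans Finset.sum_comm
    rw [Finset.sum_comm]
    refine Finset.sum_congr rfl fun a2 _ => ?_
    rw [← Finset.mul_sum, sum_eZMod_mul_eq_ite M hM]
  rw [step1]
  rw [Finset.mul_sum, Finset.sum_filter]
  refine Finset.sum_congr rfl ?_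
  intro a2 _
  rcases eq_or_ne (v * (a2 : ZMod M)) K with hva | hva
  · rw [if_neg (by simpa using hva)]
    apply Finset.sum_eq_zero
    intro a1 _
    have : u * (a1 : ZMod M) - v * (a2 : ZMod M) + K ≠ 0 := by
      rw [hva]; simpa using mul_ne_zero hu (a1.ne_zero)
    rw [if_neg this, mul_zero]
  · rw [if_pos (by simpa using hva)]
    have hd : v * (a2 : ZMod M) - K ≠ 0 := sub_ne_zero.mpr hva
    set w : (ZMod M)ˣ := (Units.mk0 u hu)⁻¹ * Units.mk0 _ hd with hw
    have hwval : (w : ZMod M) = u⁻¹ * (v * (a2 : ZMod M) - K) := by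
      simp [hw, Units.val_inv_eq_inv_val]
    rw [Finset.sum_eq_single w]
    · rw [hwval, if_pos (by field_simp; ring), mul_comm]
    · intro a1 _ hne
      have : u * (a1 : ZMod M) - v * (a2 : ZMod M) + K ≠ 0 := by
        intro h
        apply hne
        have : (a1 : ZMod M) = (w : ZMod M) := by
          rw [hwval]
          field_simp at h ⊢
          linear_combination h
        exact Units.ext this
      rw [if_neg this, mul_zero]
    · intro h; exact absurd (Finset.mem_univ w) h

/-- Evaluation of the complete character sum arising after Cauchy–Schwarz and Poisson:
summing the additive character over `b` picks out the relation
`c1⁻¹ℓ1·a1 - c2⁻¹ℓ2·a2 + K = 0` (where `K = (r1r2c1c2)⁻¹·F` and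
`F = ℓ1c2r2 - ℓ2c1r1 + c1c2n`), reducing the triple sum to `M` times a one-variable
complete character sum of Möbius type. -/
theorem complete_char_sum_reduction
    (M : ℕ) (hM : M.Prime) (χ : DirichletCharacter ℂ M) (hχ : χ ≠ 1)
    (ℓ1 ℓ2 c1 c2 r1 r2 : (ZMod M)ˣ) (n : ZMod M) :
    haveI : NeZero M := ⟨hM.ne_zero⟩
    let F : ZMod M := (ℓ1 : ZMod M) * (c2 : ZMod M) * (r2 : ZMod M)
      - (ℓ2 : ZMod M) * (c1 : ZMod M) * (r1 : ZMod M)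
      + (c1 : ZMod M) * (c2 : ZMod M) * n
    let K : ZMod M := (((r1 * r2 * c1 * c2)⁻¹ : (ZMod M)ˣ) : ZMod M) * F
    ∑ b : ZMod M, ∑ a1 : (ZMod M)ˣ, ∑ a2 : (ZMod M)ˣ,
        χ (((a1⁻¹ : (ZMod M)ˣ) : ZMod M) + (r1 : ZMod M)) *
        (starRingEnd ℂ) (χ (((a2⁻¹ : (ZMod M)ˣ) : ZMod M) + (r2 : ZMod M))) *
        eZMod M (b * (((c1⁻¹ : (ZMod M)ˣ) : ZMod M) * (ℓ1 : ZMod M) * (a1 : ZMod M)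
          - ((c2⁻¹ : (ZMod M)ˣ) : ZMod M) * (ℓ2 : ZMod M) * (a2 : ZMod M)
          + ((c1⁻¹ : (ZMod M)ˣ) : ZMod M) * (ℓ1 : ZMod M) * ((r1⁻¹ : (ZMod M)ˣ) : ZMod M)
          - ((c2⁻¹ : (ZMod M)ˣ) : ZMod M) * (ℓ2 : ZMod M) * ((r2⁻¹ : (ZMod M)ˣ) : ZMod M)
          + ((r1⁻¹ : (ZMod M)ˣ) : ZMod M) * ((r2⁻¹ : (ZMod M)ˣ) : ZMod M) * n))
      = (M : ℂ) *
        ∑ x ∈ Finset.univ.filter (fun x : (ZMod M)ˣ =>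
            ((c2⁻¹ : (ZMod M)ˣ) : ZMod M) * (ℓ2 : ZMod M) * (x : ZMod M) ≠ K),
          χ (((c1⁻¹ : (ZMod M)ˣ) : ZMod M) * (ℓ1 : ZMod M) *
              (((c2⁻¹ : (ZMod M)ˣ) : ZMod M) * (ℓ2 : ZMod M) * (x : ZMod M) - K)⁻¹
            + (r1 : ZMod M)) *
          (starRingEnd ℂ) (χ (((x⁻¹ : (ZMod M)ˣ) : ZMod M) + (r2 : ZMod M))) := by
  haveI : NeZero M := ⟨hM.ne_zero⟩
  haveI : Fact M.Prime := ⟨hM⟩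
  intro F K
  simp only [Units.val_inv_eq_inv_val]
  have hℓ1 : (ℓ1 : ZMod M) ≠ 0 := ℓ1.ne_zero
  have hℓ2 : (ℓ2 : ZMod M) ≠ 0 := ℓ2.ne_zero
  have hc1 : (c1 : ZMod M) ≠ 0 := c1.ne_zero
  have hc2 : (c2 : ZMod M) ≠ 0 := c2.ne_zero
  have hr1 : (r1 : ZMod M) ≠ 0 := r1.ne_zero
  have hr2 : (r2 : ZMod M) ≠ 0 := r2.ne_zero
  set u : ZMod M := ((c1 : ZMod M))⁻¹ * (ℓ1 : ZMod M) with hu_def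
  set v : ZMod M := ((c2 : ZMod M))⁻¹ * (ℓ2 : ZMod M) with hv_def
  have hu : u ≠ 0 := mul_ne_zero (inv_ne_zero hc1) hℓ1
  have hv : v ≠ 0 := mul_ne_zero (inv_ne_zero hc2) hℓ2
  have hC : u * ((r1 : ZMod M))⁻¹ - v * ((r2 : ZMod M))⁻¹
      + ((r1 : ZMod M))⁻¹ * ((r2 : ZMod M))⁻¹ * n = K := by
    unfold K F u v
    simp only [Units.val_inv_eq_inv_val, Units.val_mul]
    field_simp
  have harg : ∀ a1 a2 : (ZMod M)ˣ,
      u * (a1 : ZMod M) - v * (a2 : ZMod M) + u * ((r1 : ZMod M))⁻¹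
        - v * ((r2 : ZMod M))⁻¹ + ((r1 : ZMod M))⁻¹ * ((r2 : ZMod M))⁻¹ * n
      = u * (a1 : ZMod M) - v * (a2 : ZMod M) + K := by
    intro a1 a2
    linear_combination hC
  simp only [harg]
  have hkey := key_reduction M hM
    (fun z : ZMod M => χ (z⁻¹ + (r1 : ZMod M)))
    (fun z : ZMod M => (starRingEnd ℂ) (χ (z⁻¹ + (r2 : ZMod M)))) u v K hu hv
  rw [hkey]
  refine congrArg _ (Finset.sum_congr rfl fun x _ => ?_)
  have : (u⁻¹ * (v * (x : ZMod M) - K))⁻¹ = u * (v * (x : ZMod M) - K)⁻¹ := by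
    rw [mul_inv_rev, inv_inv, mul_comm]
  rw [this]
end
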